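/- In the setting of Theorem 6.2: if p^{n+1} = p^n - τ(ξⁿ + (|ξⁿ|_F/λ)p^{n+1}) with ξⁿ = D'(pⁿ) (pointwise), |p^{n+1}|_F ≤ λ, and τ·‖Λ°B⁻¹Λ*‖ < 1, then the energy decrease estimate D(pⁿ) - D(p^{n+1}) ≥ (1/(2τ))·(1 - τ‖Λ°B⁻¹Λ*‖)·‖pⁿ - p^{n+1}‖² holds. -/

import Mathlib

open scoped RealInnerProductSpace

theorem chambolle_energy_decrease
    (Ω : Type*) [Fintype Ω] (d m : ℕ)
    (A : PiLp 2 (fun _ : Ω => EuclideanSpace ℝ (Fin d × Fin m)) →L[ℝ]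
         PiLp 2 (fun _ : Ω => EuclideanSpace ℝ (Fin d × Fin m)))
    (hsa : ∀ u v, ⟪A u, v⟫ = ⟪u, A v⟫)
    (hnonneg : ∀ u, 0 ≤ ⟪A u, u⟫)
    (h : PiLp 2 (fun _ : Ω => EuclideanSpace ℝ (Fin d × Fin m))) (c₀ : ℝ)
    (D : PiLp 2 (fun _ : Ω => EuclideanSpace ℝ (Fin d × Fin m)) → ℝ)
    (hD : ∀ p, D p = (1 / 2) * ⟪A p, p⟫ - ⟪h, p⟫ + c₀)
    (lam τ : ℝ) (hlam : 0 < lam) (hτ : 0 < τ)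
    (hτA : τ * ‖A‖ < 1)
    (p0 p1 ξ : PiLp 2 (fun _ : Ω => EuclideanSpace ℝ (Fin d × Fin m)))
    (hξ : ξ = A p0 - h)
    (hupdate : ∀ x : Ω, p1 x = p0 x - τ • (ξ x + (‖ξ x‖ / lam) • p1 x))
    (hfeas : ∀ x : Ω, ‖p1 x‖ ≤ lam) :
    D p0 - D p1 ≥ (1 / (2 * τ)) * (1 - τ * ‖A‖) * ‖p0 - p1‖ ^ 2 := by
  set δ := p0 - p1 with hδ
  -- energy identity
  have h2 : ⟪A p1, p0⟫ = ⟪A p0, p1⟫ := by rw [hsa, real_inner_comm]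
  have key : D p0 - D p1 = ⟪ξ, δ⟫ - (1 / 2) * ⟪A δ, δ⟫ := by
    rw [hD, hD, hξ]
    have h1 : ⟪A δ, δ⟫
        = ⟪A p0, p0⟫ - ⟪A p0, p1⟫ - ⟪A p1, p0⟫ + ⟪A p1, p1⟫ := by
      simp only [hδ, map_sub, inner_sub_left, inner_sub_right]; ring
    have h3 : ⟪A p0 - h, δ⟫
        = ⟪A p0, p0⟫ - ⟪A p0, p1⟫ - ⟪h, p0⟫ + ⟪h, p1⟫ := by
      simp only [hδ, inner_sub_left, inner_sub_right]; ring
    rw [h3, h1, h2]; ring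
  -- pointwise estimate
  have hpt : ∀ x, (1 / (2 * τ)) * ‖δ x‖ ^ 2 ≤ ⟪ξ x, δ x⟫ := by
    intro x
    have hδx : δ x = τ • (ξ x + (‖ξ x‖ / lam) • p1 x) := by
      simp only [hδ, PiLp.sub_apply]
      conv_lhs => rw [hupdate x]
      abel
    set s : ℝ := ‖ξ x‖ / lam with hs
    have hs0 : 0 ≤ s := div_nonneg (norm_nonneg _) hlam.le
    have hsc : s * ‖p1 x‖ ≤ ‖ξ x‖ := by
      calc s * ‖p1 x‖ ≤ s * lam := by
            exact mul_le_mul_of_nonneg_left (hfeas x) hs0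
        _ = ‖ξ x‖ := by rw [hs, div_mul_cancel₀ _ hlam.ne']
    have hinner : ⟪ξ x, δ x⟫ = τ * (‖ξ x‖ ^ 2 + s * ⟪ξ x, p1 x⟫) := by
      rw [hδx, real_inner_smul_right, inner_add_right, real_inner_smul_right,
        real_inner_self_eq_norm_sq]
    have hnorm : ‖δ x‖ ^ 2
        = τ ^ 2 * (‖ξ x‖ ^ 2 + 2 * (s * ⟪ξ x, p1 x⟫) + s ^ 2 * ‖p1 x‖ ^ 2) := by
      rw [hδx, norm_smul, mul_pow, Real.norm_eq_abs, abs_of_pos hτ,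
        norm_add_sq_real, real_inner_smul_right, norm_smul, Real.norm_eq_abs,
        abs_of_nonneg hs0, mul_pow]
    rw [hinner, hnorm]
    have hcs : ⟪ξ x, p1 x⟫ ≤ ‖ξ x‖ * ‖p1 x‖ := real_inner_le_norm _ _
    have h1 : (1 / (2 * τ)) * (τ ^ 2 * (‖ξ x‖ ^ 2 + 2 * (s * ⟪ξ x, p1 x⟫)
        + s ^ 2 * ‖p1 x‖ ^ 2))
        = (τ / 2) * (‖ξ x‖ ^ 2 + 2 * (s * ⟪ξ x, p1 x⟫) + s ^ 2 * ‖p1 x‖ ^ 2) := by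
      field_simp
    rw [h1]
    have hkey : 0 ≤ τ * (‖ξ x‖ ^ 2 - s ^ 2 * ‖p1 x‖ ^ 2) := by
      apply mul_nonneg hτ.le
      nlinarith [mul_le_mul hsc hsc (mul_nonneg hs0 (norm_nonneg _))
        (norm_nonneg (ξ x))]
    linarith [hkey]
  -- sum the pointwise estimate
  have hinnersum : ⟪ξ, δ⟫ = ∑ x, ⟪ξ x, δ x⟫ := by
    rw [PiLp.inner_apply]
  have hnormsum : ‖δ‖ ^ 2 = ∑ x, ‖δ x‖ ^ 2 := by
    rw [← real_inner_self_eq_norm_sq, PiLp.inner_apply]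
    exact Finset.sum_congr rfl fun x _ => real_inner_self_eq_norm_sq _
  have hsum : (1 / (2 * τ)) * ‖δ‖ ^ 2 ≤ ⟪ξ, δ⟫ := by
    rw [hinnersum, hnormsum, Finset.mul_sum]
    exact Finset.sum_le_sum fun x _ => hpt x
  -- operator norm bound
  have hop : ⟪A δ, δ⟫ ≤ ‖A‖ * ‖δ‖ ^ 2 := by
    calc ⟪A δ, δ⟫ ≤ ‖A δ‖ * ‖δ‖ := real_inner_le_norm _ _
      _ ≤ ‖A‖ * ‖δ‖ * ‖δ‖ := by
          exact mul_le_mul_of_nonneg_right (A.le_opNorm δ) (norm_nonneg _)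
      _ = ‖A‖ * ‖δ‖ ^ 2 := by ring
  rw [key, ge_iff_le]
  have hτne : τ ≠ 0 := ne_of_gt hτ
  obtain ⟨a, ha⟩ : ∃ a : ℝ, ‖A‖ = a := ⟨‖A‖, rfl⟩
  rw [ha] at hop ⊢
  have hfin : (1 / (2 * τ)) * (1 - τ * a) * ‖δ‖ ^ 2
      = (1 / (2 * τ)) * ‖δ‖ ^ 2 - (1 / 2) * (a * ‖δ‖ ^ 2) := by
    field_simp
  rw [hfin]
  linarith
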